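/- A square-free binomial z^u − z^v with u, v ∈ {0,1}^K lies in the ideal Ĩ (the elimination ideal of I_L + I_T with respect to the t-variables) if and only if supp(E^t u) = supp(E^t v), where E is the adjacency matrix of the frame. -/

import Mathlib

open MvPolynomial Finset

namespace B18

noncomputable section

variable {K : ℕ}

def Idl (E : Fin K → Fin K → Bool) : Ideal (MvPolynomial (Fin K ⊕ Fin K) ℂ) :=
  Ideal.span (Set.range (fun w : Fin K =>
      (X (Sum.inl w) : MvPolynomial (Fin K ⊕ Fin K) ℂ) ^ 2 - X (Sum.inl w))) +
  Ideal.span (Set.range (fun w : Fin K =>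
      (X (Sum.inr w) : MvPolynomial (Fin K ⊕ Fin K) ℂ) -
        ∏ w' : Fin K, if E w w' then X (Sum.inl w') else 1))

def nn (E : Fin K → Fin K → Bool) (u : Fin K → Bool) (j : Fin K) : ℕ :=
  ∑ i : Fin K, (if E i j then 1 else 0) * (if u i then 1 else 0)

lemma nn_eq_card (E : Fin K → Fin K → Bool) (u : Fin K → Bool) (j : Fin K) :
    nn E u j = (univ.filter (fun i => u i ∧ E i j)).card := by
  rw [nn, Finset.card_filter]
  refine Finset.sum_congr rfl fun i _ => ?_
  by_cases hu : u i <;> by_cases hE : E i j <;> simp [hu, hE]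

lemma nn_ne_zero_iff (E : Fin K → Fin K → Bool) (u : Fin K → Bool) (j : Fin K) :
    nn E u j ≠ 0 ↔ ∃ i, u i ∧ E i j := by
  rw [nn_eq_card, ← Nat.pos_iff_ne_zero, Finset.card_pos, Finset.filter_nonempty_iff]
  simp

lemma gen1_mem (E : Fin K → Fin K → Bool) (w : Fin K) :
    (X (Sum.inl w) : MvPolynomial (Fin K ⊕ Fin K) ℂ) ^ 2 - X (Sum.inl w) ∈ Idl E :=
  Ideal.mem_sup_left (Ideal.subset_span ⟨w, rfl⟩)

lemma gen2_mem (E : Fin K → Fin K → Bool) (w : Fin K) :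
    ((X (Sum.inr w) : MvPolynomial (Fin K ⊕ Fin K) ℂ) -
        ∏ w' : Fin K, if E w w' then X (Sum.inl w') else 1) ∈ Idl E :=
  Ideal.mem_sup_right (Ideal.subset_span ⟨w, rfl⟩)

lemma quot_monomial (E : Fin K → Fin K → Bool) (u : Fin K → Bool) :
    Ideal.Quotient.mk (Idl E)
        (rename Sum.inr (∏ i : Fin K, if u i then (X i : MvPolynomial (Fin K) ℂ) else 1))
      = ∏ j : Fin K,
          if nn E u j ≠ 0 then Ideal.Quotient.mk (Idl E) (X (Sum.inl j)) else 1 := by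
  set π := Ideal.Quotient.mk (Idl E) with hπ
  set t : Fin K → _ := fun j => π (X (Sum.inl j)) with ht
  have hsq : ∀ j, t j ^ 2 = t j := by
    intro j
    have := (Ideal.Quotient.eq (I := Idl E)).mpr (gen1_mem E j)
    simpa [ht, map_pow] using this
  have hpow : ∀ (j : Fin K) (m : ℕ), m ≠ 0 → t j ^ m = t j := by
    intro j m hm
    induction m with
    | zero => exact absurd rfl hm
    | succ n ih =>
      rcases Nat.eq_zero_or_pos n with h0 | h0
      · simp [h0]
      · rw [pow_succ, ih (Nat.pos_iff_ne_zero.mp h0)]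
        have := hsq j
        rwa [sq] at this
  have hz : ∀ w, π (X (Sum.inr w)) = ∏ j, if E w j then t j else 1 := by
    intro w
    have := (Ideal.Quotient.eq (I := Idl E)).mpr (gen2_mem E w)
    rw [this, map_prod]
    exact Finset.prod_congr rfl fun j _ => by by_cases h : E w j <;> simp [h, ht, hπ]
  calc π (rename Sum.inr (∏ i : Fin K, if u i then (X i : MvPolynomial (Fin K) ℂ) else 1))
      = ∏ i : Fin K, if u i then π (X (Sum.inr i)) else 1 := by
        rw [map_prod, map_prod]
        exact Finset.prod_congr rfl fun i _ => by by_cases h : u i <;> simp [h]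
    _ = ∏ i : Fin K, ∏ j : Fin K, if u i ∧ E i j then t j else 1 := by
        refine Finset.prod_congr rfl fun i _ => ?_
        by_cases h : u i
        · rw [if_pos h, hz]
          exact Finset.prod_congr rfl fun j _ => by simp [h]
        · simp [h]
    _ = ∏ j : Fin K, ∏ i : Fin K, if u i ∧ E i j then t j else 1 := Finset.prod_comm
    _ = ∏ j : Fin K, t j ^ (univ.filter (fun i => u i ∧ E i j)).card := by
        refine Finset.prod_congr rfl fun j _ => ?_
        rw [← Finset.prod_filter, Finset.prod_const]
    _ = ∏ j : Fin K, if nn E u j ≠ 0 then t j else 1 := by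
        refine Finset.prod_congr rfl fun j _ => ?_
        rw [nn_eq_card]
        by_cases h : (univ.filter (fun i => u i ∧ E i j)).card = 0
        · simp [h]
        · rw [if_pos h, hpow j _ h]


def σb (s : Fin K → Bool) : Fin K → ℂ := fun j => if s j then 1 else 0

def φ (E : Fin K → Fin K → Bool) (s : Fin K → Bool) :
    MvPolynomial (Fin K ⊕ Fin K) ℂ →ₐ[ℂ] ℂ :=
  aeval (Sum.elim (σb s) (fun w => ∏ j, if E w j then σb s j else 1))

lemma φ_ker (E : Fin K → Fin K → Bool) (s : Fin K → Bool) :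
    Idl E ≤ RingHom.ker (φ E s) := by
  refine sup_le ?_ ?_ <;> rw [Ideal.span_le] <;> rintro x ⟨w, rfl⟩ <;>
    simp only [SetLike.mem_coe, RingHom.mem_ker]
  · have : φ E s (X (Sum.inl w)) = σb s w := by simp [φ]
    rw [map_sub, map_pow, this]
    by_cases h : s w <;> simp [σb, h]
  · rw [map_sub, map_prod]
    have h1 : φ E s (X (Sum.inr w)) = ∏ j, if E w j then σb s j else 1 := by simp [φ]
    have h2 : ∀ j, φ E s (if E w j then (X (Sum.inl j) : MvPolynomial (Fin K ⊕ Fin K) ℂ) else 1)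
        = if E w j then σb s j else 1 := by
      intro j; by_cases h : E w j <;> simp [φ, h]
    rw [h1, Finset.prod_congr rfl fun j _ => h2 j, sub_self]

lemma φ_rename (E : Fin K → Fin K → Bool) (s : Fin K → Bool) (u : Fin K → Bool) :
    φ E s (rename Sum.inr (∏ i : Fin K, if u i then (X i : MvPolynomial (Fin K) ℂ) else 1))
      = ∏ i : Fin K, if u i then (∏ j : Fin K, if E i j then σb s j else 1) else 1 := by
  rw [φ, aeval_rename, map_prod]
  refine Finset.prod_congr rfl fun i _ => ?_
  by_cases h : u i <;> simp [h, Function.comp]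

lemma key (E : Fin K → Fin K → Bool) (u v : Fin K → Bool)
    (h : rename Sum.inr
        ((∏ i : Fin K, if u i then (X i : MvPolynomial (Fin K) ℂ) else 1) -
         (∏ i : Fin K, if v i then (X i : MvPolynomial (Fin K) ℂ) else 1)) ∈ Idl E)
    (j0 : Fin K) (hu : nn E u j0 ≠ 0) : nn E v j0 ≠ 0 := by
  by_contra hv
  set s : Fin K → Bool := fun j => decide (j ≠ j0) with hs
  have h0 : φ E s (rename Sum.inr
        ((∏ i : Fin K, if u i then (X i : MvPolynomial (Fin K) ℂ) else 1) -
         (∏ i : Fin K, if v i then (X i : MvPolynomial (Fin K) ℂ) else 1))) = 0 :=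
    φ_ker E s h
  rw [map_sub, map_sub, φ_rename, φ_rename] at h0
  obtain ⟨i0, hui0, hEi0⟩ := (nn_ne_zero_iff E u j0).mp hu
  have hA : (∏ i : Fin K, if u i then (∏ j : Fin K, if E i j then σb s j else 1) else 1) = 0 := by
    refine Finset.prod_eq_zero (Finset.mem_univ i0) ?_
    rw [if_pos hui0]
    refine Finset.prod_eq_zero (Finset.mem_univ j0) ?_
    rw [if_pos hEi0]
    simp [σb, hs]
  have hB : (∏ i : Fin K, if v i then (∏ j : Fin K, if E i j then σb s j else 1) else 1) = 1 := by
    refine Finset.prod_eq_one fun i _ => ?_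
    by_cases hvi : v i
    · rw [if_pos hvi]
      refine Finset.prod_eq_one fun j _ => ?_
      by_cases hE : E i j
      · rw [if_pos hE]
        have hj : j ≠ j0 := by
          rintro rfl
          exact absurd hv ((nn_ne_zero_iff E v j).mpr ⟨i, hvi, hE⟩)
        simp [σb, hs, hj]
      · simp [hE]
    · simp [hvi]
  rw [hA, hB] at h0
  norm_num at h0

end
end B18

open B18

/-- A square-free binomial z^u − z^v, u, v ∈ {0,1}^K, lies in
the elimination ideal Ĩ = (I_L + I_T) ∩ ℂ[z] (realized via the injection
rename Sum.inr : ℂ[z] → ℂ[t,z]) iff supp(Eᵗu) = supp(Eᵗv). -/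
theorem binomial_mem_elimination_iff {K : ℕ} (E : Fin K → Fin K → Bool)
    (u v : Fin K → Bool) :
    ((∏ i : Fin K, if u i then (X i : MvPolynomial (Fin K) ℂ) else 1) -
     (∏ i : Fin K, if v i then (X i : MvPolynomial (Fin K) ℂ) else 1)) ∈
      Ideal.comap (rename (Sum.inr : Fin K → Fin K ⊕ Fin K) :
          MvPolynomial (Fin K) ℂ →ₐ[ℂ] MvPolynomial (Fin K ⊕ Fin K) ℂ)
        (Ideal.span (Set.range (fun w : Fin K =>
            (X (Sum.inl w) : MvPolynomial (Fin K ⊕ Fin K) ℂ) ^ 2 - X (Sum.inl w))) +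
         Ideal.span (Set.range (fun w : Fin K =>
            (X (Sum.inr w) : MvPolynomial (Fin K ⊕ Fin K) ℂ) -
              ∏ w' : Fin K, if E w w' then X (Sum.inl w') else 1)))
    ↔
    {j : Fin K | (∑ i : Fin K, (if E i j then 1 else 0) * (if u i then 1 else 0) : ℕ) ≠ 0} =
    {j : Fin K | (∑ i : Fin K, (if E i j then 1 else 0) * (if v i then 1 else 0) : ℕ) ≠ 0} := by
  rw [Ideal.mem_comap]
  have hset : ({j : Fin K | (∑ i : Fin K, (if E i j then 1 else 0) * (if u i then 1 else 0) : ℕ) ≠ 0} =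
      {j : Fin K | (∑ i : Fin K, (if E i j then 1 else 0) * (if v i then 1 else 0) : ℕ) ≠ 0})
      ↔ ({j : Fin K | nn E u j ≠ 0} = {j : Fin K | nn E v j ≠ 0}) := Iff.rfl
  rw [hset]
  constructor
  · intro h
    have h' : rename Sum.inr
        ((∏ i : Fin K, if u i then (X i : MvPolynomial (Fin K) ℂ) else 1) -
         (∏ i : Fin K, if v i then (X i : MvPolynomial (Fin K) ℂ) else 1)) ∈ Idl E := h
    have h'' : rename Sum.inr
        ((∏ i : Fin K, if v i then (X i : MvPolynomial (Fin K) ℂ) else 1) -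
         (∏ i : Fin K, if u i then (X i : MvPolynomial (Fin K) ℂ) else 1)) ∈ Idl E := by
      have := (Idl E).neg_mem h'
      rwa [← map_neg, neg_sub] at this
    ext j0
    exact ⟨key E u v h' j0, key E v u h'' j0⟩
  · intro h
    show rename Sum.inr _ ∈ Idl E
    rw [map_sub]
    refine (Ideal.Quotient.eq).mp ?_
    rw [quot_monomial, quot_monomial]
    refine Finset.prod_congr rfl fun j _ => ?_
    have := Set.ext_iff.mp h j
    simp only [Set.mem_setOf_eq] at this
    by_cases hj : nn E u j ≠ 0
    · rw [if_pos hj, if_pos (this.mp hj)]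
    · rw [if_neg hj, if_neg (fun hc => hj (this.mpr hc))]
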